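/- Let d ≥ 1, c ≥ 0, and K ∈ (0, 1]. For any x ∈ ℝ^d, write x = (x₁, x_{−1}) where x_{−1} = (x₂, …, x_d). If ‖x_{−1}‖ ≤ K·|x₁|, then the soft-thresholded vector satisfies ‖(S_c(x))_{−1}‖ ≤ K·|(S_c(x))₁|. That is, soft-thresholding preserves the property that the projection onto the coordinate subspace spanned by the first standard basis vector dominates (by factor 1/K) the projection onto the complementary coordinate subspace. -/

import Mathlib

/-- Soft-thresholding operator `S_c` on `ℝ^d`, defined componentwise by
`(S_c x)_i = sign(x_i) * max (|x_i| - c) 0`. -/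
noncomputable def soft {d : ℕ} (c : ℝ) (x : EuclideanSpace ℝ (Fin d)) :
    EuclideanSpace ℝ (Fin d) :=
  WithLp.toLp 2 (fun i => Real.sign (x i) * max (|x i| - c) 0)

lemma abs_soft_aux (c t : ℝ) (hc : 0 ≤ c) :
    |Real.sign t * max (|t| - c) 0| = max (|t| - c) 0 := by
  rcases lt_trichotomy t 0 with ht | ht | ht
  · rw [Real.sign_of_neg ht]
    rw [abs_mul, abs_neg, abs_one, one_mul, abs_of_nonneg (le_max_right _ _)]
  · simp [ht, max_eq_right (by linarith : -c ≤ 0)]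
  · rw [Real.sign_of_pos ht]
    rw [abs_mul, abs_one, one_mul, abs_of_nonneg (le_max_right _ _)]

lemma soft_scale (a b c : ℝ) (hc : 0 ≤ c) (h0 : 0 < b) (hab : a ≤ b) (ha : 0 ≤ a) :
    max (a - c) 0 ≤ (a / b) * max (b - c) 0 := by
  rcases le_or_gt a c with hac | hac
  · rw [max_eq_right (by linarith : a - c ≤ 0)]
    positivity
  · have hbc : c < b := lt_of_lt_of_le hac hab
    rw [max_eq_left (by linarith : (0:ℝ) ≤ a - c), max_eq_left (by linarith : (0:ℝ) ≤ b - c)]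
    rw [div_mul_eq_mul_div, le_div_iff₀ h0]
    nlinarith

/-- Soft-thresholding preserves domination of the tail coordinates by the first coordinate:
if `‖x₋₁‖ ≤ K |x₁|` with `0 < K ≤ 1`, then `‖(S_c x)₋₁‖ ≤ K |(S_c x)₁|`. -/
theorem soft_preserves_domination (d : ℕ) (hd : 0 < d) (c K : ℝ) (hc : 0 ≤ c)
    (hK0 : 0 < K) (hK1 : K ≤ 1) (x : EuclideanSpace ℝ (Fin d))
    (h : Real.sqrt (∑ i ∈ Finset.univ.filter (fun i => i ≠ (⟨0, hd⟩ : Fin d)), (x i) ^ 2) ≤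
      K * |x ⟨0, hd⟩|) :
    Real.sqrt (∑ i ∈ Finset.univ.filter (fun i => i ≠ (⟨0, hd⟩ : Fin d)), (soft c x i) ^ 2) ≤
      K * |soft c x ⟨0, hd⟩| := by
  set i0 : Fin d := ⟨0, hd⟩
  set s := Finset.univ.filter (fun i => i ≠ i0) with hs
  set b := |x i0| with hbdef
  have hb0 : 0 ≤ b := abs_nonneg _
  have hSnn : 0 ≤ ∑ i ∈ s, (x i) ^ 2 := Finset.sum_nonneg fun i _ => sq_nonneg _
  have hS : ∑ i ∈ s, (x i) ^ 2 ≤ (K * b) ^ 2 := by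
    have := Real.sqrt_le_sqrt (le_of_eq (Real.sq_sqrt hSnn).symm)
    calc ∑ i ∈ s, (x i) ^ 2 = (Real.sqrt (∑ i ∈ s, (x i) ^ 2)) ^ 2 :=
          (Real.sq_sqrt hSnn).symm
      _ ≤ (K * b) ^ 2 := by
          apply pow_le_pow_left₀ (Real.sqrt_nonneg _) h
  have habs : |soft c x i0| = max (b - c) 0 := abs_soft_aux c (x i0) hc
  rcases eq_or_lt_of_le hb0 with hb | hb
  · -- b = 0, so all tail coordinates are 0
    have hz : (K * b) ^ 2 = 0 := by rw [← hb]; ring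
    have hS0 : ∑ i ∈ s, (x i) ^ 2 = 0 := le_antisymm (by linarith) hSnn
    have hx : ∀ i ∈ s, x i = 0 := by
      intro i hi
      have := (Finset.sum_eq_zero_iff_of_nonneg fun i _ => sq_nonneg (x i)).mp hS0 i hi
      exact pow_eq_zero_iff (n := 2) (by norm_num) |>.mp this
    have : ∑ i ∈ s, (soft c x i) ^ 2 = 0 := by
      apply Finset.sum_eq_zero
      intro i hi
      simp [soft, hx i hi]
    rw [this, Real.sqrt_zero]
    positivity
  · -- main case: b > 0
    set M := max (b - c) 0 with hM
    have hM0 : 0 ≤ M := le_max_right _ _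
    have key : ∑ i ∈ s, (soft c x i) ^ 2 ≤ (K * M) ^ 2 := by
      have step : ∀ i ∈ s, (soft c x i) ^ 2 ≤ (x i) ^ 2 / b ^ 2 * M ^ 2 := by
        intro i hi
        have hxi : |x i| ≤ b := by
          have h1 : (x i) ^ 2 ≤ ∑ j ∈ s, (x j) ^ 2 :=
            Finset.single_le_sum (fun j _ => sq_nonneg (x j)) hi
          have hK2 : (K * b) ^ 2 ≤ b ^ 2 := by
            have hKsq : K ^ 2 ≤ 1 := by nlinarith
            nlinarith [sq_nonneg b]
          have h2 : (x i) ^ 2 ≤ b ^ 2 := le_trans (h1.trans hS) hK2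
          calc |x i| = Real.sqrt ((x i) ^ 2) := (Real.sqrt_sq_eq_abs _).symm
            _ ≤ Real.sqrt (b ^ 2) := Real.sqrt_le_sqrt h2
            _ = b := Real.sqrt_sq hb0
        have h3 : |soft c x i| = max (|x i| - c) 0 := abs_soft_aux c (x i) hc
        have h4 := soft_scale (|x i|) b c hc hb hxi (abs_nonneg _)
        have h5 : (soft c x i) ^ 2 = (max (|x i| - c) 0) ^ 2 := by
          rw [← h3, sq_abs]
        rw [h5]
        have h6 : (max (|x i| - c) 0) ^ 2 ≤ ((|x i| / b) * M) ^ 2 := by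
          apply pow_le_pow_left₀ (le_max_right _ _) h4
        calc (max (|x i| - c) 0) ^ 2 ≤ ((|x i| / b) * M) ^ 2 := h6
          _ = (x i) ^ 2 / b ^ 2 * M ^ 2 := by
              rw [mul_pow, div_pow, sq_abs]
      calc ∑ i ∈ s, (soft c x i) ^ 2 ≤ ∑ i ∈ s, (x i) ^ 2 / b ^ 2 * M ^ 2 :=
            Finset.sum_le_sum step
        _ = (∑ i ∈ s, (x i) ^ 2) * (M ^ 2 / b ^ 2) := by
            rw [Finset.sum_mul]
            exact Finset.sum_congr rfl fun i _ => by ring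
        _ ≤ (K * b) ^ 2 * (M ^ 2 / b ^ 2) :=
            mul_le_mul_of_nonneg_right hS (by positivity)
        _ = (K * M) ^ 2 := by
            field_simp
    have : Real.sqrt (∑ i ∈ s, (soft c x i) ^ 2) ≤ Real.sqrt ((K * M) ^ 2) :=
      Real.sqrt_le_sqrt key
    rw [Real.sqrt_sq (by positivity)] at this
    rw [habs]
    exact this
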